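/- arXiv:1911.06685 — 3 statements merged into one kernel-verified Lean document; each statement's English description precedes it below -/
import Mathlib

section
/- In the linear SEM of the previous setting, a linear predictor Ŷ = α_A A + Σ_j α_j X^{(j)} satisfies Ŷ(A=1, R=r, noise=u) = Ŷ(A=0, R=r, noise=u) for all r and u if and only if Σ_j α_j · (Σ_{paths A→X_j disjoint from R} Π_{edges in path} β) − α_A = 0. -/
open Finset

/-- Sum, over all directed paths from the root `0` to `j` that avoid the set
`R` of intervened variables, of the product of the edge coefficients `β`
(paths are encoded as finite sets of vertices since the DAG on `Fin (n+1)` is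
topologically ordered: `β i j = 0` unless `i < j`). -/
def pathSum (n : ℕ) (β : Fin (n+1) → Fin (n+1) → ℝ) (R : Finset (Fin (n+1)))
    (j : Fin (n+1)) : ℝ :=
  ∑ S ∈ Finset.univ.powerset.filter
      (fun S : Finset (Fin (n+1)) =>
        0 ∈ S ∧ j ∈ S ∧ (∀ i ∈ S, i ≤ j) ∧ S ∩ R = ∅),
    (((S.sort (· ≤ ·)).zip (S.sort (· ≤ ·)).tail).map (fun e => β e.1 e.2)).prod

variable {n : ℕ}

/-- chain product of β along a list -/
def cp (β : Fin (n+1) → Fin (n+1) → ℝ) : List (Fin (n+1)) → ℝ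
  | [] => 1
  | [_] => 1
  | a :: b :: l => β a b * cp β (b :: l)

lemma cp_eq (β : Fin (n+1) → Fin (n+1) → ℝ) (l : List (Fin (n+1))) :
    ((l.zip l.tail).map (fun e => β e.1 e.2)).prod = cp β l := by
  match l with
  | [] => simp [cp]
  | [a] => simp [cp]
  | a :: b :: l =>
    have := cp_eq β (b :: l)
    simp [cp, List.zip, ← this]

lemma cp_append (β : Fin (n+1) → Fin (n+1) → ℝ) (l : List (Fin (n+1))) (hl : l ≠ [])
    (j : Fin (n+1)) : cp β (l ++ [j]) = cp β l * β (l.getLast hl) j := by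
  match l with
  | [a] => simp [cp]
  | a :: b :: l =>
    have := cp_append β (b :: l) (by simp) j
    simp only [List.cons_append, cp] at this ⊢
    rw [this, mul_assoc,
      List.getLast_cons (l := b :: l) (by simp)]

lemma sort_insert_max {S : Finset (Fin (n+1))} {j : Fin (n+1)}
    (h : ∀ i ∈ S, i < j) (hj : j ∉ S) :
    (insert j S).sort (· ≤ ·) = S.sort (· ≤ ·) ++ [j] := by
  have hnd : (S.sort (· ≤ ·) ++ [j]).Nodup := by
    simp only [List.nodup_append, List.nodup_cons, List.nodup_nil]
    refine ⟨Finset.sort_nodup _ _, by simp, ?_⟩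
    intro a ha b hb h
    rw [List.mem_singleton] at hb
    rw [h, hb] at ha
    exact hj ((Finset.mem_sort _).1 ha)
  have hsorted : (S.sort (· ≤ ·) ++ [j]).Pairwise (· ≤ ·) := by
    refine List.pairwise_append.2 ⟨Finset.pairwise_sort _ _, List.pairwise_singleton _ j, ?_⟩
    intro a ha b hb
    simp only [List.mem_singleton] at hb
    exact hb ▸ (h a ((Finset.mem_sort _).1 ha)).le
  have := (List.toFinset_sort (α := Fin (n+1)) (· ≤ ·) hnd).2 hsorted
  rw [← this]
  congr 1
  ext x
  simp [Finset.mem_insert, or_comm]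

lemma getLast_sort_max {S : Finset (Fin (n+1))} {i : Fin (n+1)}
    (hi : i ∈ S) (hmax : ∀ x ∈ S, x ≤ i) (h : S.sort (· ≤ ·) ≠ []) :
    (S.sort (· ≤ ·)).getLast h = i := by
  have hS : S = insert i (S.erase i) := by rw [Finset.insert_erase hi]
  have hs : S.sort (· ≤ ·) = (S.erase i).sort (· ≤ ·) ++ [i] := by
    conv_lhs => rw [hS]
    exact sort_insert_max (fun x hx => lt_of_le_of_ne (hmax x (Finset.mem_of_mem_erase hx))
      (Finset.ne_of_mem_erase hx)) (Finset.notMem_erase _ _)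
  simp [hs]

lemma pathSum_eq_cp (n : ℕ) (β : Fin (n+1) → Fin (n+1) → ℝ) (R : Finset (Fin (n+1)))
    (j : Fin (n+1)) : pathSum n β R j =
    ∑ S ∈ Finset.univ.powerset.filter
      (fun S : Finset (Fin (n+1)) =>
        0 ∈ S ∧ j ∈ S ∧ (∀ i ∈ S, i ≤ j) ∧ S ∩ R = ∅),
    cp β (S.sort (· ≤ ·)) := by
  unfold pathSum
  exact Finset.sum_congr rfl fun S _ => cp_eq β _

lemma pathSum_zero (β : Fin (n+1) → Fin (n+1) → ℝ) (R : Finset (Fin (n+1)))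
    (hR : (0 : Fin (n+1)) ∉ R) : pathSum n β R 0 = 1 := by
  rw [pathSum_eq_cp]
  have : Finset.univ.powerset.filter
      (fun S : Finset (Fin (n+1)) =>
        0 ∈ S ∧ (0:Fin (n+1)) ∈ S ∧ (∀ i ∈ S, i ≤ 0) ∧ S ∩ R = ∅) = {{0}} := by
    ext S
    simp only [Finset.mem_filter, Finset.mem_powerset, Finset.subset_univ, true_and,
      Finset.mem_singleton]
    constructor
    · rintro ⟨h0, -, hle, -⟩
      ext x
      simp only [Finset.mem_singleton]
      exact ⟨fun hx => le_antisymm (hle x hx) (Fin.zero_le x), fun hx => hx ▸ h0⟩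
    · rintro rfl
      refine ⟨by simp, by simp, by simp, ?_⟩
      rw [Finset.singleton_inter_of_notMem hR]
  rw [this, Finset.sum_singleton, Finset.sort_singleton]
  simp [cp]

lemma pathSum_of_mem (β : Fin (n+1) → Fin (n+1) → ℝ) (R : Finset (Fin (n+1)))
    {j : Fin (n+1)} (hj : j ∈ R) : pathSum n β R j = 0 := by
  rw [pathSum_eq_cp]
  apply Finset.sum_eq_zero
  intro S hS
  simp only [Finset.mem_filter] at hS
  obtain ⟨-, -, hjS, -, hSR⟩ := hS
  exact absurd hSR (by
    intro h
    have : j ∈ S ∩ R := Finset.mem_inter.2 ⟨hjS, hj⟩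
    simp [h] at this)

lemma pathSum_rec (β : Fin (n+1) → Fin (n+1) → ℝ)
    (hβ : ∀ i j : Fin (n+1), ¬ i < j → β i j = 0)
    (R : Finset (Fin (n+1))) (hR : (0 : Fin (n+1)) ∉ R)
    {j : Fin (n+1)} (hj0 : j ≠ 0) (hjR : j ∉ R) :
    pathSum n β R j = ∑ i, β i j * pathSum n β R i := by
  have key : ∀ k : Fin (n+1), pathSum n β R k =
      ∑ S ∈ Finset.univ.powerset.filter
        (fun S : Finset (Fin (n+1)) =>
          0 ∈ S ∧ k ∈ S ∧ (∀ i ∈ S, i ≤ k) ∧ S ∩ R = ∅),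
      cp β (S.sort (· ≤ ·)) := fun k => pathSum_eq_cp n β R k
  set P : Fin (n+1) → Finset (Finset (Fin (n+1))) := fun k =>
    Finset.univ.powerset.filter
      (fun S : Finset (Fin (n+1)) =>
        0 ∈ S ∧ k ∈ S ∧ (∀ i ∈ S, i ≤ k) ∧ S ∩ R = ∅) with hP
  have memP : ∀ (k : Fin (n+1)) (S : Finset (Fin (n+1))),
      S ∈ P k ↔ 0 ∈ S ∧ k ∈ S ∧ (∀ i ∈ S, i ≤ k) ∧ S ∩ R = ∅ := by
    intro k S
    simp [hP]
  rw [key]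
  have : ∀ i : Fin (n+1), β i j * pathSum n β R i
      = ∑ S ∈ P i, β i j * cp β (S.sort (· ≤ ·)) := by
    intro i; rw [key i, Finset.mul_sum]
  rw [Finset.sum_congr rfl fun i _ => this i]
  rw [← Finset.sum_filter_of_ne (p := (· < j)) (s := Finset.univ)
    (f := fun i => ∑ S ∈ P i, β i j * cp β (S.sort (· ≤ ·)))
    (by
      intro i _ h
      by_contra hlt
      exact h (Finset.sum_eq_zero fun S _ => by rw [hβ i j hlt, zero_mul]))]
  rw [← Finset.sum_sigma (Finset.univ.filter (· < j)) P
    (fun p => β p.1 j * cp β (p.2.sort (· ≤ ·)))]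
  refine Finset.sum_bij' (fun S hS => ⟨(S.erase j).max' ?_, S.erase j⟩)
    (fun p _ => insert j p.2) ?_ ?_ ?_ ?_ ?_
  · -- nonempty
    rw [memP] at hS
    exact ⟨0, Finset.mem_erase.2 ⟨Ne.symm hj0, hS.1⟩⟩
  · -- forward membership
    intro S hS
    rw [memP] at hS
    obtain ⟨h0, hjS, hle, hSR⟩ := hS
    have h0e : (0 : Fin (n+1)) ∈ S.erase j := Finset.mem_erase.2 ⟨Ne.symm hj0, h0⟩
    have hne : (S.erase j).Nonempty := ⟨0, h0e⟩
    set i := (S.erase j).max' hne with hi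
    have hiS : i ∈ S.erase j := Finset.max'_mem _ _
    refine Finset.mem_sigma.2 ⟨Finset.mem_filter.2 ⟨Finset.mem_univ _, ?_⟩, ?_⟩
    · exact lt_of_le_of_ne (hle i (Finset.mem_of_mem_erase hiS)) (Finset.ne_of_mem_erase hiS)
    · rw [memP]
      refine ⟨h0e, hiS, fun x hx => Finset.le_max' _ x hx, ?_⟩
      have : S.erase j ∩ R ⊆ S ∩ R :=
        Finset.inter_subset_inter (Finset.erase_subset _ _) (le_refl R)
      rw [hSR] at this
      exact Finset.subset_empty.1 this
  · -- backward membership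
    intro p hp
    obtain ⟨i, S⟩ := p
    rw [Finset.mem_sigma, Finset.mem_filter] at hp
    obtain ⟨⟨-, hij⟩, hS⟩ := hp
    rw [memP] at hS
    obtain ⟨h0, hiS, hle, hSR⟩ := hS
    rw [memP]
    refine ⟨Finset.mem_insert_of_mem h0, Finset.mem_insert_self _ _, ?_, ?_⟩
    · intro x hx
      rcases Finset.mem_insert.1 hx with rfl | hx
      · exact le_refl _
      · exact (lt_of_le_of_lt (hle x hx) hij).le
    · rw [Finset.insert_inter_of_notMem hjR, hSR]
  · -- left inverse
    intro S hS
    rw [memP] at hS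
    exact Finset.insert_erase hS.2.1
  · -- right inverse
    intro p hp
    obtain ⟨i, S⟩ := p
    rw [Finset.mem_sigma, Finset.mem_filter] at hp
    obtain ⟨⟨-, hij⟩, hS⟩ := hp
    rw [memP] at hS
    obtain ⟨h0, hiS, hle, hSR⟩ := hS
    have hjS : j ∉ S := fun h => absurd (hle j h) (not_le.2 hij)
    have hers : (insert j S).erase j = S := Finset.erase_insert hjS
    have hmax : ∀ hne, ((insert j S).erase j).max' hne = i := by
      intro hne
      apply le_antisymm
      · apply Finset.max'_le
        intro y hy
        rw [hers] at hy
        exact hle y hy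
      · apply Finset.le_max'
        rw [hers]
        exact hiS
    have hne2 : ((insert j S).erase j).Nonempty := by
      rw [hers]; exact ⟨i, hiS⟩
    refine Sigma.ext (hmax hne2) ?_
    simp [hers]
  · -- values
    intro S hS
    rw [memP] at hS
    obtain ⟨h0, hjS, hle, hSR⟩ := hS
    have h0e : (0 : Fin (n+1)) ∈ S.erase j := Finset.mem_erase.2 ⟨Ne.symm hj0, h0⟩
    have hne : (S.erase j).Nonempty := ⟨0, h0e⟩
    set i := (S.erase j).max' hne with hi
    have hsort : S.sort (· ≤ ·) = (S.erase j).sort (· ≤ ·) ++ [j] := by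
      conv_lhs => rw [← Finset.insert_erase hjS]
      exact sort_insert_max
        (fun x hx => lt_of_le_of_ne (hle x (Finset.mem_of_mem_erase hx))
          (Finset.ne_of_mem_erase hx))
        (Finset.notMem_erase _ _)
    have hlne : (S.erase j).sort (· ≤ ·) ≠ [] := by
      intro h
      have := (Finset.mem_sort (α := Fin (n+1)) (· ≤ ·)).2 h0e
      rw [h] at this
      simp at this
    rw [hsort, cp_append β _ hlne j,
      getLast_sort_max (Finset.max'_mem _ hne) (fun x hx => Finset.le_max' _ x hx) hlne]
    ring

noncomputable def mval (n : ℕ) (β : Fin (n+1) → Fin (n+1) → ℝ) (R : Finset (Fin (n+1)))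
    (rv u : Fin (n+1) → ℝ) (a : ℝ) (j : Fin (n+1)) : ℝ :=
  if j = 0 then a
  else if j ∈ R then rv j
  else (∑ i : Fin (n+1), if h : i < j then β i j * mval n β R rv u a i else 0) + u j
termination_by j.val
decreasing_by exact h

lemma mval_spec (n : ℕ) (β : Fin (n+1) → Fin (n+1) → ℝ)
    (hβ : ∀ i j : Fin (n+1), ¬ i < j → β i j = 0)
    (R : Finset (Fin (n+1))) (rv u : Fin (n+1) → ℝ) (a : ℝ) (j : Fin (n+1)) :
    mval n β R rv u a j =
      if j = 0 then a
      else if j ∈ R then rv j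
      else (∑ i, β i j * mval n β R rv u a i) + u j := by
  rw [mval]
  congr 1
  congr 1
  congr 1
  apply Finset.sum_congr rfl
  intro i _
  by_cases h : i < j
  · rw [dif_pos h]
  · rw [dif_neg h, hβ i j h, zero_mul]

lemma val_diff (n : ℕ) (β : Fin (n+1) → Fin (n+1) → ℝ)
    (hβ : ∀ i j : Fin (n+1), ¬ i < j → β i j = 0)
    (R : Finset (Fin (n+1))) (hR : (0 : Fin (n+1)) ∉ R)
    (u rv : Fin (n+1) → ℝ) (val : ℝ → Fin (n+1) → ℝ)
    (hval : ∀ (a : ℝ) (j : Fin (n+1)), val a j =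
      if j = 0 then a
      else if j ∈ R then rv j
      else (∑ i, β i j * val a i) + u j) :
    ∀ j : Fin (n+1), val 1 j - val 0 j = pathSum n β R j := by
  suffices H : ∀ m : ℕ, ∀ j : Fin (n+1), j.val < m → val 1 j - val 0 j = pathSum n β R j by
    exact fun j => H (n+2) j (by omega)
  intro m
  induction m with
  | zero => exact fun j h => absurd h (by omega)
  | succ m ihm =>
    intro j hjm
    have ih : ∀ i : Fin (n+1), i < j → val 1 i - val 0 i = pathSum n β R i := by
      intro i hij
      exact ihm i (by omega)
    by_cases hj0 : j = 0
    · subst hj0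
      rw [hval 1 0, hval 0 0, pathSum_zero β R hR]
      simp
    · by_cases hjR : j ∈ R
      · rw [hval 1 j, hval 0 j, if_neg hj0, if_neg hj0, if_pos hjR, if_pos hjR,
          pathSum_of_mem β R hjR, sub_self]
      · rw [hval 1 j, hval 0 j, if_neg hj0, if_neg hj0, if_neg hjR, if_neg hjR,
          pathSum_rec β hβ R hR hj0 hjR]
        have : ∀ i : Fin (n+1), β i j * val 1 i - β i j * val 0 i
            = β i j * pathSum n β R i := by
          intro i
          by_cases h : i < j
          · rw [← mul_sub, ih i h]
          · rw [hβ i j h]; ring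
        rw [add_sub_add_right_eq_sub, ← Finset.sum_sub_distrib]
        exact Finset.sum_congr rfl fun i _ => this i

/-- Theorem 2 (strong resolved fairness for linear additive SEMs): a linear
predictor `Ŷ = α_A·A + Σ_j α_j·X⁽ʲ⁾` is invariant between the interventional
worlds `do(A=1, R=rv)` and `do(A=0, R=rv)` for all interventions `rv` and all
noises `u` if and only if
`α_A + Σ_j α_j · (Σ_{paths A→X_j disjoint from R} Π β) = 0`
(sign convention: `Ŷ(A=1) - Ŷ(A=0) = α_A + Σ_j α_j·(path sum)`). -/
theorem linear_sem_strong_resolved_fairness (n : ℕ)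
    (β : Fin (n+1) → Fin (n+1) → ℝ)
    (hβ : ∀ i j : Fin (n+1), ¬ i < j → β i j = 0)
    (R : Finset (Fin (n+1))) (hR : (0 : Fin (n+1)) ∉ R)
    (αA : ℝ) (α : Fin (n+1) → ℝ) :
    (∀ (u rv : Fin (n+1) → ℝ) (val : ℝ → Fin (n+1) → ℝ),
        (∀ (a : ℝ) (j : Fin (n+1)), val a j =
          if j = 0 then a
          else if j ∈ R then rv j
          else (∑ i, β i j * val a i) + u j) →
        αA * 1 + ∑ j ∈ Finset.univ.filter (· ≠ (0 : Fin (n+1))), α j * val 1 j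
          = αA * 0 + ∑ j ∈ Finset.univ.filter (· ≠ (0 : Fin (n+1))), α j * val 0 j)
      ↔ αA + ∑ j ∈ Finset.univ.filter (· ≠ (0 : Fin (n+1))),
          α j * pathSum n β R j = 0 := by
  have key : ∀ (u rv : Fin (n+1) → ℝ) (val : ℝ → Fin (n+1) → ℝ),
      (∀ (a : ℝ) (j : Fin (n+1)), val a j =
        if j = 0 then a
        else if j ∈ R then rv j
        else (∑ i, β i j * val a i) + u j) →
      (αA * 1 + ∑ j ∈ Finset.univ.filter (· ≠ (0 : Fin (n+1))), α j * val 1 j)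
        - (αA * 0 + ∑ j ∈ Finset.univ.filter (· ≠ (0 : Fin (n+1))), α j * val 0 j)
      = αA + ∑ j ∈ Finset.univ.filter (· ≠ (0 : Fin (n+1))), α j * pathSum n β R j := by
    intro u rv val hval
    have hd := val_diff n β hβ R hR u rv val hval
    have : ∑ j ∈ Finset.univ.filter (· ≠ (0 : Fin (n+1))), α j * val 1 j
        - ∑ j ∈ Finset.univ.filter (· ≠ (0 : Fin (n+1))), α j * val 0 j
        = ∑ j ∈ Finset.univ.filter (· ≠ (0 : Fin (n+1))), α j * pathSum n β R j := by
      rw [← Finset.sum_sub_distrib]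
      refine Finset.sum_congr rfl fun j _ => ?_
      rw [← mul_sub, hd j]
    linarith
  constructor
  · intro h
    have h2 := h (fun _ => 0) (fun _ => 0) (mval n β R (fun _ => 0) (fun _ => 0))
      (fun a j => mval_spec n β hβ R _ _ a j)
    have h3 := key (fun _ => 0) (fun _ => 0) (mval n β R (fun _ => 0) (fun _ => 0))
      (fun a j => mval_spec n β hβ R _ _ a j)
    linarith
  · intro h u rv val hval
    have h3 := key u rv val hval
    linarith
end

section
/- Let A ~ Bernoulli(1/2), ε_1, ε_2 ~ N(0, 0.05) independent of A and of each other, X_1 = (1/2)·1(A=0) + ε_1, X_2 = (2/3)(1(A=0) - 1/2) + ε_2, and Y | (X_1, X_2) ~ Bernoulli(expit(X_1 + X_2)) where expit(x) = e^x/(1+e^x). After adaptation FT(X_1) = ε_1 and FT(Y) | (FT(X_1), X_2) ~ Bernoulli(expit(FT(X_1) + X_2)). Then E[FT(Y) | A=0] - E[FT(Y) | A=1] = E[expit(ε_1 + 1/3 + ε_2)] - E[expit(ε_1 - 1/3 + ε_2)] > 0. -/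
open MeasureTheory ProbabilityTheory
open scoped NNReal

/-- The logistic (expit) function. -/
noncomputable def expit (x : ℝ) : ℝ := Real.exp x / (1 + Real.exp x)

lemma expit_pos (x : ℝ) : 0 < expit x := by
  unfold expit; positivity

lemma expit_le_one (x : ℝ) : expit x ≤ 1 := by
  unfold expit
  rw [div_le_one (by positivity)]
  linarith [Real.exp_pos x]

lemma expit_strictMono : StrictMono expit := by
  intro x y hxy
  unfold expit
  rw [div_lt_div_iff₀ (by positivity) (by positivity)]
  have := Real.exp_lt_exp.2 hxy
  nlinarith [Real.exp_pos x, Real.exp_pos y]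

lemma expit_continuous : Continuous expit := by
  unfold expit
  exact Real.continuous_exp.div (by continuity) (fun x => by positivity)


/-- Appendix B parity-gap example: with `A ~ Bernoulli(1/2)`,
`ε₁, ε₂ ~ N(0, 0.05)` mutually independent of `A`,
`X₂ = (2/3)(1(A=0) - 1/2) + ε₂`, `FT(X₁) = ε₁`, and
`FT(Y) | (FT(X₁), X₂) ~ Bernoulli(expit(FT(X₁) + X₂))`, the parity gap is
`E[FT(Y)|A=0] - E[FT(Y)|A=1] = E[expit(ε₁ + 1/3 + ε₂)] - E[expit(ε₁ - 1/3 + ε₂)] > 0`. -/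
theorem appendix_parity_gap_example
    {Ω : Type*} [m0 : MeasurableSpace Ω] (μ : Measure Ω) [IsProbabilityMeasure μ]
    (A ε₁ ε₂ : Ω → ℝ)
    (hmeas : ∀ i, Measurable (![A, ε₁, ε₂] i))
    (hAbin : ∀ ω, A ω = 0 ∨ A ω = 1)
    (hA : μ {ω | A ω = 0} = 1/2)
    (hε₁ : μ.map ε₁ = gaussianReal 0 ((0.05 : ℝ≥0)))
    (hε₂ : μ.map ε₂ = gaussianReal 0 ((0.05 : ℝ≥0)))
    (hindep : iIndepFun (m := fun _ : Fin 3 => (inferInstance : MeasurableSpace ℝ))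
      ![A, ε₁, ε₂] μ)
    (X₂ : Ω → ℝ)
    (hX₂ : ∀ ω, X₂ ω
      = (2/3) * (Set.indicator ({0} : Set ℝ) (fun _ => (1:ℝ)) (A ω) - 1/2) + ε₂ ω)
    (FTY : Ω → ℝ)
    (hFTYmeas : Measurable FTY) (hFTYbd : ∀ ω, FTY ω ∈ Set.Icc (0:ℝ) 1)
    (hcond : μ[FTY | MeasurableSpace.comap (fun ω => (A ω, ε₁ ω, ε₂ ω)) inferInstance]
      =ᵐ[μ] fun ω => expit (ε₁ ω + X₂ ω)) :
    (∫ ω in {ω | A ω = 0}, FTY ω ∂μ) / (μ {ω | A ω = 0}).toReal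
        - (∫ ω in {ω | A ω = 1}, FTY ω ∂μ) / (μ {ω | A ω = 1}).toReal
      = (∫ ω, expit (ε₁ ω + 1/3 + ε₂ ω) ∂μ) - (∫ ω, expit (ε₁ ω - 1/3 + ε₂ ω) ∂μ) ∧
    0 < (∫ ω, expit (ε₁ ω + 1/3 + ε₂ ω) ∂μ) - (∫ ω, expit (ε₁ ω - 1/3 + ε₂ ω) ∂μ) := by
  have hAm : Measurable A := by simpa using hmeas 0
  have hε₁m : Measurable ε₁ := by simpa using hmeas 1
  have hε₂m : Measurable ε₂ := by simpa using hmeas 2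
  -- basic measurability / integrability of the expit integrands
  have hgm : ∀ c : ℝ, Measurable (fun ω => expit (ε₁ ω + c + ε₂ ω)) := fun c =>
    expit_continuous.measurable.comp ((hε₁m.add measurable_const).add hε₂m)
  have hgint : ∀ c : ℝ, Integrable (fun ω => expit (ε₁ ω + c + ε₂ ω)) μ := fun c => by
    refine Integrable.mono' (integrable_const 1) (hgm c).aestronglyMeasurable
      (ae_of_all _ fun ω => ?_)
    rw [Real.norm_eq_abs, abs_of_pos (expit_pos _)]
    exact expit_le_one _
  -- measure of the two groups
  have hS0m : MeasurableSet {ω | A ω = 0} := hAm (measurableSet_singleton 0)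
  have hS1m : MeasurableSet {ω | A ω = 1} := hAm (measurableSet_singleton 1)
  have hS1eq : {ω | A ω = 1} = {ω | A ω = 0}ᶜ := by
    ext ω
    rcases hAbin ω with h | h <;> simp [h]
  have hA1 : μ {ω | A ω = 1} = 1/2 := by
    have h2 : (1:ENNReal) = 1/2 + 1/2 := by
      rw [ENNReal.div_add_div_same, one_add_one_eq_two]
      exact (ENNReal.div_self two_ne_zero ENNReal.ofNat_ne_top).symm
    rw [hS1eq, measure_compl hS0m (measure_ne_top μ _), hA, measure_univ]
    exact ENNReal.sub_eq_of_eq_add (by norm_num) h2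
  -- independence: set integral over {A = b} factorizes
  have key : ∀ (b c : ℝ), ∫ ω in {ω | A ω = b}, expit (ε₁ ω + c + ε₂ ω) ∂μ
      = (μ {ω | A ω = b}).toReal * ∫ ω, expit (ε₁ ω + c + ε₂ ω) ∂μ := by
    intro b c
    have hSm : MeasurableSet {ω | A ω = b} := hAm (measurableSet_singleton b)
    have hindAB : IndepFun (fun ω => (ε₁ ω, ε₂ ω)) A μ := by
      have := hindep.indepFun_prodMk hmeas 1 2 0 (by decide) (by decide)
      simpa using this
    have hφm : Measurable (fun p : ℝ × ℝ => expit (p.1 + c + p.2)) :=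
      expit_continuous.measurable.comp
        ((measurable_fst.add measurable_const).add measurable_snd)
    have hψm : Measurable (fun a : ℝ =>
        Set.indicator ({b} : Set ℝ) (fun _ => (1:ℝ)) a) :=
      measurable_const.indicator (measurableSet_singleton b)
    have hI : IndepFun (fun ω => expit (ε₁ ω + c + ε₂ ω))
        (fun ω => Set.indicator ({b} : Set ℝ) (fun _ => (1:ℝ)) (A ω)) μ :=
      hindAB.comp hφm hψm
    have hψint : Integrable
        (fun ω => Set.indicator ({b} : Set ℝ) (fun _ => (1:ℝ)) (A ω)) μ := by
      refine Integrable.mono' (integrable_const 1)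
        ((hψm.comp hAm)).aestronglyMeasurable (ae_of_all _ fun ω => ?_)
      rw [Real.norm_eq_abs]
      by_cases h : A ω = b <;> simp [h]
    have hprod := hI.integral_mul_eq_mul_integral (hgint c).aestronglyMeasurable hψint.aestronglyMeasurable
    have h1 : ((fun ω => expit (ε₁ ω + c + ε₂ ω))
          * fun ω => Set.indicator ({b} : Set ℝ) (fun _ => (1:ℝ)) (A ω))
        = Set.indicator {ω | A ω = b} (fun ω => expit (ε₁ ω + c + ε₂ ω)) := by
      funext ω
      by_cases h : A ω = b <;> simp [Set.indicator, h]
    have h2 : (fun ω => Set.indicator ({b} : Set ℝ) (fun _ => (1:ℝ)) (A ω))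
        = Set.indicator {ω | A ω = b} (fun _ => (1:ℝ)) := by
      funext ω
      by_cases h : A ω = b <;> simp [Set.indicator, h]
    rw [h1, h2, integral_indicator hSm, integral_indicator_const _ hSm] at hprod
    rw [hprod]
    simp [mul_comm, measureReal_def]
  -- the set {A = b} is measurable w.r.t. the comap σ-algebra
  have hpairm : Measurable (fun ω => (A ω, ε₁ ω, ε₂ ω)) :=
    hAm.prodMk (hε₁m.prodMk hε₂m)
  have hm' : MeasurableSpace.comap (fun ω => (A ω, ε₁ ω, ε₂ ω)) inferInstance ≤ m0 :=
    hpairm.comap_le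
  have hSb : ∀ b : ℝ, MeasurableSet[MeasurableSpace.comap
      (fun ω => (A ω, ε₁ ω, ε₂ ω)) inferInstance] {ω | A ω = b} := by
    intro b
    refine ⟨Prod.fst ⁻¹' {b}, measurable_fst (measurableSet_singleton b), ?_⟩
    ext ω; simp
  have hFTYint : Integrable FTY μ := by
    refine Integrable.mono' (integrable_const 1) hFTYmeas.aestronglyMeasurable
      (ae_of_all _ fun ω => ?_)
    rw [Real.norm_eq_abs, abs_of_nonneg (hFTYbd ω).1]
    exact (hFTYbd ω).2
  haveI : SigmaFinite (μ.trim hm') := by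
    have : IsFiniteMeasure (μ.trim hm') := isFiniteMeasure_trim hm'
    exact this.toSigmaFinite
  -- set integral of FTY over {A = b} equals that of expit (ε₁ + X₂)
  have hcondInt : ∀ b : ℝ, ∫ ω in {ω | A ω = b}, FTY ω ∂μ
      = ∫ ω in {ω | A ω = b}, expit (ε₁ ω + X₂ ω) ∂μ := by
    intro b
    rw [← setIntegral_condExp hm' hFTYint (hSb b)]
    exact setIntegral_congr_ae (hAm (measurableSet_singleton b))
      (hcond.mono fun ω h _ => h)
  -- evaluate X₂ on each group
  have hint0 : ∫ ω in {ω | A ω = 0}, FTY ω ∂μ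
      = ∫ ω in {ω | A ω = 0}, expit (ε₁ ω + (1/3 : ℝ) + ε₂ ω) ∂μ := by
    rw [hcondInt 0]
    refine setIntegral_congr_fun hS0m fun ω hω => ?_
    have hω' : A ω = 0 := hω
    have hind : Set.indicator ({0} : Set ℝ) (fun _ => (1:ℝ)) (A ω) = 1 :=
      Set.indicator_of_mem (by simp [hω']) _
    rw [hX₂, hind]
    congr 1
    ring
  have hint1 : ∫ ω in {ω | A ω = 1}, FTY ω ∂μ
      = ∫ ω in {ω | A ω = 1}, expit (ε₁ ω + (-(1/3) : ℝ) + ε₂ ω) ∂μ := by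
    rw [hcondInt 1]
    refine setIntegral_congr_fun hS1m fun ω hω => ?_
    have hω' : A ω = 1 := hω
    have hind : Set.indicator ({0} : Set ℝ) (fun _ => (1:ℝ)) (A ω) = 0 :=
      Set.indicator_of_notMem (by simp [hω']) _
    rw [hX₂, hind]
    congr 1
    ring
  have hneg : (∫ ω, expit (ε₁ ω - 1/3 + ε₂ ω) ∂μ)
      = ∫ ω, expit (ε₁ ω + (-(1/3) : ℝ) + ε₂ ω) ∂μ := by
    simp_rw [sub_eq_add_neg]
  have htoReal : (μ {ω | A ω = 0}).toReal = 1/2 := by rw [hA]; norm_num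
  have htoReal1 : (μ {ω | A ω = 1}).toReal = 1/2 := by rw [hA1]; norm_num
  constructor
  · rw [hint0, hint1, key 0 (1/3), key 1 (-(1/3)), hneg, htoReal, htoReal1]
    ring
  · -- positivity
    have hgint' : Integrable (fun ω => expit (ε₁ ω - 1/3 + ε₂ ω)) μ := by
      simpa [sub_eq_add_neg] using hgint (-(1/3))
    rw [← integral_sub (hgint (1/3)) hgint']
    have hpos : ∀ ω, 0 < expit (ε₁ ω + 1/3 + ε₂ ω) - expit (ε₁ ω - 1/3 + ε₂ ω) := by
      intro ω
      have : ε₁ ω - 1/3 + ε₂ ω < ε₁ ω + 1/3 + ε₂ ω := by linarith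
      linarith [expit_strictMono this]
    have hintsub : Integrable
        (fun ω => expit (ε₁ ω + 1/3 + ε₂ ω) - expit (ε₁ ω - 1/3 + ε₂ ω)) μ :=
      (hgint (1/3)).sub hgint'
    rw [integral_pos_iff_support_of_nonneg (fun ω => (hpos ω).le) hintsub]
    have : Function.support (fun ω =>
        expit (ε₁ ω + 1/3 + ε₂ ω) - expit (ε₁ ω - 1/3 + ε₂ ω)) = Set.univ :=
      Set.eq_univ_of_forall fun ω => (hpos ω).ne'
    rw [this]
    simp
end

section
/- Let U be a random vector with independent components uniformly distributed on [0,1], let A ∈ {0,1} be a root variable, and consider a two-variable recursive system X = g(A, U^{(X)}) with g(a, ·) strictly increasing and continuous for each a, and g(a, ·) having continuous strictly increasing inverse in u. Define FT(X) := g(0, g(1, ·)^{-1}(X)) when A = 1 and FT(X) := X when A = 0. Then FT(X) is independent of A, and FT(X) has the same distribution as X conditional on A = 0. -/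
open MeasureTheory ProbabilityTheory Set

/-- Simplest instance of the fair adaptation theorem: for `X = g(A, U)` with
`U ~ U(0,1)` independent of the binary root attribute `A`, and `g(a,·)` a
continuous strictly increasing conditional quantile function with inverse
`ginv a`, the quantile-matched adaptation
`FT(X) = g(0, ginv 1 X)` on `{A = 1}`, `FT(X) = X` on `{A = 0}`
is independent of `A` and distributed as `X` conditional on `A = 0`. -/
theorem fair_adaptation_simple
    {Ω : Type*} [MeasurableSpace Ω] (μ : Measure Ω) [IsProbabilityMeasure μ]
    (A U : Ω → ℝ) (hA : Measurable A) (hU : Measurable U)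
    (hAbin : ∀ ω, A ω = 0 ∨ A ω = 1)
    (hApos : μ {ω | A ω = 0} ≠ 0)
    (hUnif : μ.map U = MeasureTheory.volume.restrict (Ioo (0:ℝ) 1))
    (hUrange : ∀ ω, U ω ∈ Ioo (0:ℝ) 1)
    (hindep : IndepFun A U μ)
    (g ginv : ℝ → ℝ → ℝ)
    (hgmeas : ∀ a, Measurable (g a)) (hginvmeas : ∀ a, Measurable (ginv a))
    (hgmono : ∀ a, StrictMonoOn (g a) (Ioo 0 1))
    (hgcont : ∀ a, ContinuousOn (g a) (Ioo 0 1))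
    (hinv : ∀ a, ∀ u ∈ Ioo (0:ℝ) 1, ginv a (g a u) = u) :
    IndepFun (fun ω => if A ω = 1 then g 0 (ginv 1 (g (A ω) (U ω))) else g (A ω) (U ω))
        A μ ∧
      μ.map (fun ω => if A ω = 1 then g 0 (ginv 1 (g (A ω) (U ω))) else g (A ω) (U ω))
        = (μ[|{ω | A ω = 0}]).map (fun ω => g (A ω) (U ω)) := by
  -- The adapted variable is `g 0 ∘ U` everywhere.
  have hFT : (fun ω => if A ω = 1 then g 0 (ginv 1 (g (A ω) (U ω))) else g (A ω) (U ω))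
      = fun ω => g 0 (U ω) := by
    funext ω
    rcases hAbin ω with h0 | h1
    · have : A ω ≠ 1 := by rw [h0]; norm_num
      simp [this, h0]
    · simp [h1, hinv 1 (U ω) (hUrange ω)]
  rw [hFT]
  have hs : MeasurableSet {ω | A ω = 0} := hA (measurableSet_singleton 0)
  have hsne : μ {ω | A ω = 0} ≠ ⊤ := (measure_ne_top μ _)
  constructor
  · exact hindep.symm.comp (hgmeas 0) measurable_id
  · -- On `{A = 0}`, `g (A ω) (U ω) = g 0 (U ω)`, so the maps agree; then use independence.
    have hcongr : (μ[|{ω | A ω = 0}]).map (fun ω => g (A ω) (U ω))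
        = (μ[|{ω | A ω = 0}]).map (fun ω => g 0 (U ω)) := by
      apply Measure.map_congr
      have hae : ∀ᵐ ω ∂(μ[|{ω | A ω = 0}]), A ω = 0 := by
        rw [ProbabilityTheory.cond, Measure.ae_ennreal_smul_measure_iff (ENNReal.inv_ne_zero.mpr hsne)]
        exact (ae_restrict_iff' hs).2 (Filter.Eventually.of_forall fun ω h => h)
      filter_upwards [hae] with ω h
      rw [h]
    rw [hcongr]
    ext E hE
    have hmg : Measurable fun ω => g 0 (U ω) := (hgmeas 0).comp hU
    rw [Measure.map_apply hmg hE, ProbabilityTheory.cond, Measure.map_smul,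
      Measure.smul_apply, Measure.map_apply hmg hE, Measure.restrict_apply (hmg hE)]
    have hset : {ω | A ω = 0} = A ⁻¹' {0} := rfl
    have hpre : (fun ω => g 0 (U ω)) ⁻¹' E = U ⁻¹' ((g 0) ⁻¹' E) := rfl
    rw [hset, hpre, hindep.symm.measure_inter_preimage_eq_mul _ _ ((hgmeas 0) hE)
      (measurableSet_singleton 0)]
    rw [← hset, smul_eq_mul, mul_comm, mul_assoc, ENNReal.mul_inv_cancel hApos hsne, mul_one]
end
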